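/- Let p ≥ 2 be an integer, let fl be a round-to-nearest function to F_p, and let a, b ∈ F_p. Then the rounding error of the hardware addition is itself representable: (a + b) − fl(a + b) ∈ F_p. -/

import Mathlib

/-- `Fp p` is the set of `p`-bit floating-point numbers: reals of the form
`m * 2^e` with `m e : ℤ` and `|m| < 2^p` (unbounded exponent range). -/
def Fp (p : ℕ) : Set ℝ :=
  {x : ℝ | ∃ m e : ℤ, |m| < 2 ^ p ∧ x = (m : ℝ) * 2 ^ e}

/-- `fl` is a faithful rounding to `Fp p`: it maps into `Fp p`, fixes the
elements of `Fp p`, and `fl x` is either the greatest element of `Fp p`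
that is `≤ x` or the least element of `Fp p` that is `≥ x`. -/
def FaithfulRounding (p : ℕ) (fl : ℝ → ℝ) : Prop :=
  (∀ x : ℝ, fl x ∈ Fp p) ∧
  (∀ x ∈ Fp p, fl x = x) ∧
  (∀ x : ℝ, IsGreatest {y | y ∈ Fp p ∧ y ≤ x} (fl x) ∨
            IsLeast {y | y ∈ Fp p ∧ x ≤ y} (fl x))

/-- `fl` is a round-to-nearest to `Fp p`: it maps into `Fp p` and
`fl x` is at minimal distance from `x` among all elements of `Fp p`. -/
def RoundNearest (p : ℕ) (fl : ℝ → ℝ) : Prop :=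
  ∀ x : ℝ, fl x ∈ Fp p ∧ ∀ y ∈ Fp p, |x - fl x| ≤ |x - y|

lemma mem_Fp_of_abs_le {p : ℕ} (hp : 1 ≤ p) (m e : ℤ) (h : |m| ≤ 2 ^ p) :
    (m : ℝ) * 2 ^ e ∈ Fp p := by
  rcases lt_or_eq_of_le h with h | h
  · exact ⟨m, e, h, rfl⟩
  · obtain ⟨q, rfl⟩ : ∃ q, p = q + 1 := ⟨p - 1, (Nat.succ_pred_eq_of_pos hp).symm⟩
    rcases (abs_eq (by positivity : (0:ℤ) ≤ 2 ^ (q+1))).mp h with hm | hm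
    · refine ⟨2 ^ q, e + 1, ?_, ?_⟩
      · rw [abs_pow, abs_two]; exact pow_lt_pow_right₀ (by norm_num) (by omega)
      · rw [hm]; push_cast [pow_succ]; rw [zpow_add₀ (by norm_num : (2:ℝ) ≠ 0)]; ring
    · refine ⟨-2 ^ q, e + 1, ?_, ?_⟩
      · rw [abs_neg, abs_pow, abs_two]; exact pow_lt_pow_right₀ (by norm_num) (by omega)
      · rw [hm]; push_cast [pow_succ]; rw [zpow_add₀ (by norm_num : (2:ℝ) ≠ 0)]; ring

lemma exists_round (k : ℕ) (M : ℤ) :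
    ∃ N : ℤ, 2 * |M - N * 2 ^ k| ≤ 2 ^ k := by
  refine ⟨(2 * M + 2 ^ k) / 2 ^ (k + 1), ?_⟩
  set N : ℤ := (2 * M + 2 ^ k) / 2 ^ (k + 1) with hNdef
  have h1 : 0 ≤ (2 * M + 2 ^ k) % 2 ^ (k + 1) := Int.emod_nonneg _ (by positivity)
  have h2 : (2 * M + 2 ^ k) % 2 ^ (k + 1) < 2 ^ (k + 1) := Int.emod_lt_of_pos _ (by positivity)
  have h3 : 2 ^ (k + 1) * N + (2 * M + 2 ^ k) % 2 ^ (k + 1) = 2 * M + 2 ^ k :=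
    Int.mul_ediv_add_emod _ _
  have hd : 2 * (M - N * 2 ^ k) = (2 * M + 2 ^ k) % 2 ^ (k + 1) - 2 ^ k := by
    linear_combination -h3
  have habs : 2 * |M - N * 2 ^ k| = |2 * (M - N * 2 ^ k)| := by
    rw [abs_mul, abs_two]
  have hp2 : (2:ℤ) ^ (k + 1) = 2 ^ k * 2 := pow_succ 2 k
  rw [habs, hd, abs_le]
  constructor <;> linarith

lemma exists_k (p : ℕ) {M : ℤ} (h : 2 ^ p ≤ |M|) :
    ∃ k : ℕ, 1 ≤ k ∧ 2 ^ (p + k) ≤ 2 * |M| ∧ |M| < 2 ^ (p + k) := by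
  set n := |M|.toNat with hn
  have hn' : (n : ℤ) = |M| := Int.toNat_of_nonneg (abs_nonneg M)
  have hpn : 2 ^ p ≤ n := by
    have : (2:ℤ) ^ p ≤ (n : ℤ) := by rw [hn']; exact h
    exact_mod_cast this
  have hn0 : n ≠ 0 := by have : 1 ≤ 2 ^ p := Nat.one_le_two_pow; omega
  set t := Nat.log 2 n with ht
  have h1 : 2 ^ t ≤ n := Nat.pow_log_le_self 2 hn0
  have h2 : n < 2 ^ (t + 1) := Nat.lt_pow_succ_log_self (by norm_num) n
  have hpt : p ≤ t := (Nat.le_log_iff_pow_le (by norm_num) hn0).mpr hpn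
  refine ⟨t - p + 1, by omega, ?_, ?_⟩
  · have : (2:ℤ) ^ (t + 1) ≤ 2 * |M| := by
      rw [← hn']
      have : 2 ^ (t+1) ≤ 2 * n := by rw [pow_succ]; omega
      exact_mod_cast this
    have hpe : p + (t - p + 1) = t + 1 := by omega
    rw [hpe]; exact this
  · have : |M| < (2:ℤ) ^ (t + 1) := by
      rw [← hn']; exact_mod_cast h2
    have hpe : p + (t - p + 1) = t + 1 := by omega
    rw [hpe]; exact this

lemma key_lemma (p : ℕ) (hp : 2 ≤ p) (fl : ℝ → ℝ) (hfl : RoundNearest p fl)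
    (M E : ℤ)
    (hr : |(M : ℝ) * 2 ^ E - fl ((M : ℝ) * 2 ^ E)| < 2 ^ p * 2 ^ E) :
    (M : ℝ) * 2 ^ E - fl ((M : ℝ) * 2 ^ E) ∈ Fp p := by
  set x := (M : ℝ) * 2 ^ E with hxdef
  have h2E : (0:ℝ) < 2 ^ E := zpow_pos (by norm_num) E
  by_cases hM : |M| < 2 ^ p
  · have h := (hfl x).2 x ⟨M, E, hM, rfl⟩
    rw [sub_self, abs_zero] at h
    have h0 : x - fl x = 0 := abs_eq_zero.mp (le_antisymm h (abs_nonneg _))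
    rw [h0]
    exact ⟨0, 0, by simpa using pow_pos (by norm_num : (0:ℤ) < 2) p, by simp⟩
  · push_neg at hM
    obtain ⟨k, hk1, hk2, hk3⟩ := exists_k p hM
    obtain ⟨N, hN⟩ := exists_round k M
    have hNle : |N| ≤ 2 ^ p := by
      by_contra hc
      push_neg at hc
      have h4 : |N * 2 ^ k| ≤ |M| + |M - N * 2 ^ k| := by
        calc |N * 2 ^ k| = |M - (M - N * 2 ^ k)| := by ring_nf
        _ ≤ |M| + |M - N * 2 ^ k| := abs_sub _ _
      have h5 : ((2:ℤ) ^ p + 1) * 2 ^ k ≤ |N| * 2 ^ k :=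
        mul_le_mul_of_nonneg_right (by omega) (by positivity)
      have h6 : |N * 2 ^ k| = |N| * 2 ^ k := by
        rw [abs_mul, abs_pow, abs_two]
      have hpk : (2:ℤ) ^ (p + k) = 2 ^ p * 2 ^ k := pow_add 2 p k
      have hk0 : (0:ℤ) < 2 ^ k := by positivity
      linarith
    have hy : ((N:ℝ)) * 2 ^ ((k:ℤ) + E) ∈ Fp p := mem_Fp_of_abs_le (by omega) N _ hNle
    have hey : x - (N:ℝ) * 2 ^ ((k:ℤ) + E) = ((M - N * 2 ^ k : ℤ) : ℝ) * 2 ^ E := by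
      rw [hxdef, zpow_add₀ (by norm_num : (2:ℝ) ≠ 0), zpow_natCast]
      push_cast
      ring
    have hxy : 2 * |x - (N:ℝ) * 2 ^ ((k:ℤ) + E)| ≤ 2 ^ k * 2 ^ E := by
      rw [hey, abs_mul, abs_of_pos h2E]
      have hcast : 2 * |((M - N * 2 ^ k : ℤ) : ℝ)| ≤ 2 ^ k := by exact_mod_cast hN
      nlinarith [abs_nonneg ((M - N * 2 ^ k : ℤ) : ℝ)]
    have hnear := (hfl x).2 _ hy
    have hrb : 2 * |x - fl x| ≤ 2 ^ k * 2 ^ E := by linarith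
    have hxlow : (2:ℝ) ^ p * 2 ^ k * 2 ^ E ≤ 2 * |x| := by
      have hc : ((2:ℝ) ^ (p + k)) ≤ 2 * |(M:ℝ)| := by
        have : ((2:ℤ) ^ (p + k) : ℝ) ≤ ((2 * |M| : ℤ) : ℝ) := by exact_mod_cast hk2
        push_cast at this
        simpa using this
      rw [hxdef, abs_mul, abs_of_pos h2E, pow_add] at *
      nlinarith [abs_nonneg (M:ℝ)]
    obtain ⟨n, f, hn, hflx⟩ := (hfl x).1
    have hflxb : |fl x| < 2 ^ p * 2 ^ f := by
      rw [hflx, abs_mul, abs_of_pos (zpow_pos (by norm_num : (0:ℝ) < 2) f)]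
      have : |(n:ℝ)| < 2 ^ p := by exact_mod_cast hn
      exact mul_lt_mul_of_pos_right this (zpow_pos (by norm_num) f)
    have htri : |x| ≤ |x - fl x| + |fl x| := by
      calc |x| = |(x - fl x) + fl x| := by ring_nf
      _ ≤ |x - fl x| + |fl x| := abs_add_le _ _
    have hEf : E ≤ f := by
      by_contra hc
      push_neg at hc
      have hf1 : (2:ℝ) ^ f ≤ 2 ^ (E - 1) :=
        zpow_le_zpow_right₀ (by norm_num) (by omega)
      have h2E' : (2:ℝ) ^ E = 2 * 2 ^ (E - 1) := by
        have h := zpow_add_one₀ (by norm_num : (2:ℝ) ≠ 0) (E - 1)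
        rw [sub_add_cancel] at h
        linarith
      have hE1 : (0:ℝ) < 2 ^ (E - 1) := zpow_pos (by norm_num) _
      have hK : (2:ℝ) ≤ 2 ^ k := by
        calc (2:ℝ) = 2 ^ 1 := (pow_one 2).symm
        _ ≤ 2 ^ k := pow_le_pow_right₀ (by norm_num) hk1
      have hP : (4:ℝ) ≤ 2 ^ p := by
        calc (4:ℝ) = 2 ^ 2 := by norm_num
        _ ≤ 2 ^ p := pow_le_pow_right₀ (by norm_num) hp
      have hmain : (2:ℝ) ^ p * 2 ^ k * 2 ^ E < 2 ^ k * 2 ^ E + 2 ^ p * 2 ^ E := by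
        have h7 : 2 * (2:ℝ) ^ p * 2 ^ f ≤ 2 ^ p * 2 ^ E := by
          rw [h2E']
          nlinarith
        nlinarith
      nlinarith [mul_nonneg (by nlinarith : (0:ℝ) ≤ ((2:ℝ)^p - 1) * (2 ^ k - 1) - 1) h2E.le]
    refine ⟨M - n * 2 ^ (f - E).toNat, E, ?_, ?_⟩
    · have hcast : ((M - n * 2 ^ (f - E).toNat : ℤ) : ℝ) * 2 ^ E = x - fl x := by
        rw [hxdef, hflx]
        have h2f : (2:ℝ) ^ ((f - E).toNat) * 2 ^ E = 2 ^ f := by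
          rw [← zpow_natCast (2:ℝ) (f - E).toNat, ← zpow_add₀ (by norm_num : (2:ℝ) ≠ 0),
            Int.toNat_of_nonneg (by omega)]
          congr 1
          omega
        push_cast
        rw [sub_mul, mul_assoc, h2f]
      have h1 : |((M - n * 2 ^ (f - E).toNat : ℤ) : ℝ)| * 2 ^ E < 2 ^ p * 2 ^ E := by
        rw [← abs_of_pos h2E, ← abs_mul, hcast, abs_of_pos h2E]
        exact hr
      have h2 : |((M - n * 2 ^ (f - E).toNat : ℤ) : ℝ)| < 2 ^ p :=
        lt_of_mul_lt_mul_right (by linarith) h2E.le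
      exact_mod_cast h2
    · have hcast : ((M - n * 2 ^ (f - E).toNat : ℤ) : ℝ) * 2 ^ E = x - fl x := by
        rw [hxdef, hflx]
        have h2f : (2:ℝ) ^ ((f - E).toNat) * 2 ^ E = 2 ^ f := by
          rw [← zpow_natCast (2:ℝ) (f - E).toNat, ← zpow_add₀ (by norm_num : (2:ℝ) ≠ 0),
            Int.toNat_of_nonneg (by omega)]
          congr 1
          omega
        push_cast
        rw [sub_mul, mul_assoc, h2f]
      rw [← hcast]

lemma add_error_aux (p : ℕ) (hp : 2 ≤ p) (fl : ℝ → ℝ) (hfl : RoundNearest p fl)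
    (a b : ℝ) (ma ea mb eb : ℤ) (hma : |ma| < 2 ^ p) (hmb : |mb| < 2 ^ p)
    (ha : a = (ma : ℝ) * 2 ^ ea) (hb : b = (mb : ℝ) * 2 ^ eb) (hee : eb ≤ ea) :
    (a + b) - fl (a + b) ∈ Fp p := by
  have h2eb : (0:ℝ) < 2 ^ eb := zpow_pos (by norm_num) eb
  have hab : a + b = ((ma * 2 ^ (ea - eb).toNat + mb : ℤ) : ℝ) * 2 ^ eb := by
    rw [ha, hb]
    have h2f : (2:ℝ) ^ ((ea - eb).toNat) * 2 ^ eb = 2 ^ ea := by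
      rw [← zpow_natCast (2:ℝ) (ea - eb).toNat, ← zpow_add₀ (by norm_num : (2:ℝ) ≠ 0),
        Int.toNat_of_nonneg (by omega)]
      congr 1
      omega
    push_cast
    rw [add_mul, mul_assoc, h2f]
  rw [hab]
  apply key_lemma p hp fl hfl
  have hmem : a ∈ Fp p := ⟨ma, ea, hma, ha⟩
  set x : ℝ := ((ma * 2 ^ (ea - eb).toNat + mb : ℤ) : ℝ) * 2 ^ eb with hx
  have hnear := (hfl x).2 a hmem
  have hxa : x - a = b := by rw [← hab]; ring
  calc |x - fl x| ≤ |x - a| := hnear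
  _ = |b| := by rw [hxa]
  _ = |(mb : ℝ)| * 2 ^ eb := by rw [hb, abs_mul, abs_of_pos h2eb]
  _ < 2 ^ p * 2 ^ eb := by
      have : |(mb : ℝ)| < 2 ^ p := by exact_mod_cast hmb
      exact mul_lt_mul_of_pos_right this h2eb

theorem add_error_representable (p : ℕ) (hp : 2 ≤ p)
    (fl : ℝ → ℝ) (hfl : RoundNearest p fl)
    (a b : ℝ) (ha : a ∈ Fp p) (hb : b ∈ Fp p) :
    (a + b) - fl (a + b) ∈ Fp p := by
  obtain ⟨ma, ea, hma, ha'⟩ := ha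
  obtain ⟨mb, eb, hmb, hb'⟩ := hb
  rcases le_total eb ea with h | h
  · exact add_error_aux p hp fl hfl a b ma ea mb eb hma hmb ha' hb' h
  · have := add_error_aux p hp fl hfl b a mb eb ma ea hmb hma hb' ha' h
    rwa [add_comm b a] at this
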